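/- Let δ, γ ∈ ℂ and let (x, y, z) be a solution of the reduced three-wave interaction system (1) on a connected open set U ⊆ ℂ with x(t) ≠ 0 for all t ∈ U. Define p = 1/x, q = y − δ/2, r = z/x² + 1. Then for all t ∈ U: dp/dt = 1 − r − γp + 2p²q(q + δ/2), p·dq/dt = 2q + (γδ/2)p + γpq, and p·dr/dt = 2r + 2(γ+1)p − 2r² − 2(γ+1)pr + 4p²q(q + δ/2)(r − 1). In particular, the linear parts at the origin of the numerators (p·dp/dt, p·dq/dt, p·dr/dt) form a lower-triangular matrix in (p, q, r) with diagonal entries (1, 2, 2) and off-diagonal entries a₂₁ = γδ/2, a₃₁ = 2(γ+1), a₃₂ = 0. -/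

import Mathlib

open Complex

noncomputable section

/-- A solution of the reduced three-wave interaction dynamical system (1)
on a set `U ⊆ ℂ`, with parameters `δ γ : ℂ`. -/
def solTWI (δ γ : ℂ) (x y z : ℂ → ℂ) (U : Set ℂ) : Prop :=
  ∀ t ∈ U,
    HasDerivAt x (-2 * (y t) ^ 2 + γ * x t + δ * y t + z t) t ∧
    HasDerivAt y (2 * x t * y t - δ * x t + γ * y t) t ∧
    HasDerivAt z (-2 * x t * z t - 2 * z t) t

set_option maxHeartbeats 1600000 in
theorem stmt17 (δ γ : ℂ) (U : Set ℂ) (hU : IsOpen U) (hUc : IsConnected U)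
    (x y z : ℂ → ℂ) (hsol : solTWI δ γ x y z U) (hx : ∀ t ∈ U, x t ≠ 0) :
    (∀ t ∈ U,
      HasDerivAt (fun s => 1 / x s)
        (1 - (z t / (x t) ^ 2 + 1) - γ * (1 / x t)
          + 2 * (1 / x t) ^ 2 * (y t - δ / 2) * ((y t - δ / 2) + δ / 2)) t ∧
      (∃ d, HasDerivAt (fun s => y s - δ / 2) d t ∧
        (1 / x t) * d =
          2 * (y t - δ / 2) + (γ * δ / 2) * (1 / x t)
            + γ * (1 / x t) * (y t - δ / 2)) ∧
      (∃ d, HasDerivAt (fun s => z s / (x s) ^ 2 + 1) d t ∧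
        (1 / x t) * d =
          2 * (z t / (x t) ^ 2 + 1) + 2 * (γ + 1) * (1 / x t)
            - 2 * (z t / (x t) ^ 2 + 1) ^ 2
            - 2 * (γ + 1) * (1 / x t) * (z t / (x t) ^ 2 + 1)
            + 4 * (1 / x t) ^ 2 * (y t - δ / 2) * ((y t - δ / 2) + δ / 2) *
                ((z t / (x t) ^ 2 + 1) - 1))) ∧
    -- the linear part at the origin of the numerator vector field
    (∃ L : (Fin 3 → ℂ) →L[ℂ] (Fin 3 → ℂ),
      HasFDerivAt (fun P : Fin 3 → ℂ =>
        ![P 0 * (1 - P 2 - γ * P 0 + 2 * (P 0) ^ 2 * P 1 * (P 1 + δ / 2)),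
          2 * P 1 + (γ * δ / 2) * P 0 + γ * P 0 * P 1,
          2 * P 2 + 2 * (γ + 1) * P 0 - 2 * (P 2) ^ 2 - 2 * (γ + 1) * P 0 * P 2
            + 4 * (P 0) ^ 2 * P 1 * (P 1 + δ / 2) * (P 2 - 1)]) L 0 ∧
      (Matrix.of fun i j => L (Pi.single j 1) i) =
        !![1, 0, 0; γ * δ / 2, 2, 0; 2 * (γ + 1), 0, 2]) := by

  constructor
  · intro t ht
    obtain ⟨hx', hy', hz'⟩ := hsol t ht
    have hne := hx t ht
    refine ⟨?_, ⟨_, hy'.sub_const (δ / 2), ?_⟩, ?_⟩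
    · have h := hx'.inv hne
      simp only [one_div]
      refine h.congr_deriv ?_
      field_simp
      ring
    · field_simp
      ring
    · have h := ((hz'.div (hx'.pow 2) (pow_ne_zero 2 hne)).add_const 1)
      refine ⟨_, h, ?_⟩
      simp only [Pi.pow_apply]
      field_simp
      ring_nf
  · open ContinuousLinearMap in
    have hp : ∀ i : Fin 3, HasFDerivAt (fun P : Fin 3 → ℂ => P i)
        (proj i : (Fin 3 → ℂ) →L[ℂ] ℂ) (0 : Fin 3 → ℂ) := fun i => hasFDerivAt_apply i 0
    have hsq : ∀ i : Fin 3, HasFDerivAt (fun P : Fin 3 → ℂ => (P i) ^ 2)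
        ((0 : Fin 3 → ℂ) i • (proj i : (Fin 3 → ℂ) →L[ℂ] ℂ)
          + (0 : Fin 3 → ℂ) i • (proj i : (Fin 3 → ℂ) →L[ℂ] ℂ)) (0 : Fin 3 → ℂ) := by
      intro i; simp only [pow_two]; exact (hp i).mul (hp i)
    have C0 : HasFDerivAt (fun P : Fin 3 → ℂ =>
        P 0 * (1 - P 2 - γ * P 0 + 2 * (P 0) ^ 2 * P 1 * (P 1 + δ / 2)))
        (proj 0 : (Fin 3 → ℂ) →L[ℂ] ℂ) (0 : Fin 3 → ℂ) := by
      have c0 := (hp 0).mul <| (((hasFDerivAt_const (1:ℂ) (0:Fin 3 → ℂ)).sub (hp 2)).sub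
          ((hp 0).const_mul γ)).add ((((hsq 0).const_mul 2).mul (hp 1)).mul
          ((hp 1).add_const (δ / 2)))
      refine c0.congr_fderiv ?_
      ext v; simp
    have C1 : HasFDerivAt (fun P : Fin 3 → ℂ =>
        2 * P 1 + (γ * δ / 2) * P 0 + γ * P 0 * P 1)
        ((2 : ℂ) • (proj 1 : (Fin 3 → ℂ) →L[ℂ] ℂ)
          + (γ * δ / 2) • (proj 0 : (Fin 3 → ℂ) →L[ℂ] ℂ)) (0 : Fin 3 → ℂ) := by
      have c1 := (((hp 1).const_mul 2).add ((hp 0).const_mul (γ * δ / 2))).add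
          (((hp 0).const_mul γ).mul (hp 1))
      refine c1.congr_fderiv ?_
      ext v; simp
    have C2 : HasFDerivAt (fun P : Fin 3 → ℂ =>
        2 * P 2 + 2 * (γ + 1) * P 0 - 2 * (P 2) ^ 2 - 2 * (γ + 1) * P 0 * P 2
          + 4 * (P 0) ^ 2 * P 1 * (P 1 + δ / 2) * (P 2 - 1))
        ((2 : ℂ) • (proj 2 : (Fin 3 → ℂ) →L[ℂ] ℂ)
          + (2 * (γ + 1)) • (proj 0 : (Fin 3 → ℂ) →L[ℂ] ℂ)) (0 : Fin 3 → ℂ) := by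
      have q1 := ((hp 2).const_mul 2).add ((hp 0).const_mul (2 * (γ + 1)))
      have q2 := (q1.sub ((hsq 2).const_mul 2)).sub
          (((hp 0).const_mul (2 * (γ + 1))).mul (hp 2))
      have c2 := q2.add ((((hsq 0).const_mul 4).mul (hp 1)).mul
          ((hp 1).add_const (δ / 2)) |>.mul ((hp 2).sub_const 1))
      refine c2.congr_fderiv ?_
      ext v; simp
    refine ⟨ContinuousLinearMap.pi
        ![(proj 0 : (Fin 3 → ℂ) →L[ℂ] ℂ),
          (2 : ℂ) • (proj 1 : (Fin 3 → ℂ) →L[ℂ] ℂ)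
            + (γ * δ / 2) • (proj 0 : (Fin 3 → ℂ) →L[ℂ] ℂ),
          (2 : ℂ) • (proj 2 : (Fin 3 → ℂ) →L[ℂ] ℂ)
            + (2 * (γ + 1)) • (proj 0 : (Fin 3 → ℂ) →L[ℂ] ℂ)],
        hasFDerivAt_pi'.2 ?_, ?_⟩
    · intro i
      fin_cases i <;>
        simp only [Matrix.cons_val_zero, Matrix.cons_val_one, Matrix.head_cons,
          ContinuousLinearMap.proj_pi, Fin.isValue, Matrix.cons_val_two, Matrix.tail_cons,
          Fin.zero_eta, Fin.mk_one]
      · exact C0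
      · exact C1
      · exact C2
    · ext i j
      fin_cases i <;> fin_cases j <;>
        simp [Pi.single_apply, Matrix.of_apply]
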